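/- For every invertible n×n real matrix g and all n×n real matrices ζ and X, letting h := g·exp(ζ), one has h · (∫₀¹ exp(−sζ) X exp(sζ) ds) · h⁻¹ = ∫₀¹ exp(s·(gζg⁻¹)) · (gXg⁻¹) · exp(−s·(gζg⁻¹)) ds. Equivalently, as linear maps on n×n real matrices, Ad_{g·exp(ζ)} ∘ J_ζ = J̄_{Ad_g ζ} ∘ Ad_g, where J̄_μ := J_{−μ} is the left group Jacobian. -/

import Mathlib

/-!
STATEMENT 2: For every invertible n×n real matrix g and all n×n real matrices ζ and X,
letting h := g·exp(ζ), one has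
h · (∫₀¹ exp(−sζ) X exp(sζ) ds) · h⁻¹
  = ∫₀¹ exp(s·(gζg⁻¹)) · (gXg⁻¹) · exp(−s·(gζg⁻¹)) ds.
Equivalently, Ad_{g·exp(ζ)} ∘ J_ζ = J̄_{Ad_g ζ} ∘ Ad_g, where J̄_μ := J_{−μ}.
-/

open scoped Matrix

attribute [local instance] Matrix.frobeniusNormedAddCommGroup Matrix.frobeniusNormedSpace

/-- The matrix exponential on `n × n` real matrices. -/
noncomputable def mexp {n : Type*} [Fintype n] [DecidableEq n] (A : Matrix n n ℝ) :
    Matrix n n ℝ :=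
  NormedSpace.exp A

attribute [local instance] Matrix.frobeniusNormedRing Matrix.frobeniusNormedAlgebra

theorem Ad_mul_exp_comp_rightJacobian
    {n : Type*} [Fintype n] [DecidableEq n] (g : Matrix n n ℝ) (hg : IsUnit g)
    (ζ X : Matrix n n ℝ) :
    (g * mexp ζ) * (∫ s in (0:ℝ)..1, mexp (-(s • ζ)) * X * mexp (s • ζ)) * (g * mexp ζ)⁻¹
      = ∫ s in (0:ℝ)..1,
          mexp (s • (g * ζ * g⁻¹)) * (g * X * g⁻¹) * mexp (-(s • (g * ζ * g⁻¹))) := by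
  have hcont : Continuous fun s : ℝ => mexp (-(s • ζ)) * X * mexp (s • ζ) := by
    apply Continuous.mul
    · exact ((NormedSpace.exp_continuous (𝔸 := Matrix n n ℝ)).comp ((continuous_id.smul continuous_const).neg)).mul
        continuous_const
    · exact (NormedSpace.exp_continuous (𝔸 := Matrix n n ℝ)).comp (continuous_id.smul continuous_const)
  letI : ENormedAddMonoid (Matrix n n ℝ) := NormedAddCommGroup.toENormedAddCommMonoid.toENormedAddMonoid
  have hint : IntervalIntegrable (fun s : ℝ => mexp (-(s • ζ)) * X * mexp (s • ζ))
      MeasureTheory.volume 0 1 := hcont.intervalIntegrable 0 1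
  set h : Matrix n n ℝ := g * mexp ζ with hh
  -- push conjugation inside the integral
  have hΦ : ∀ (Y : (Matrix n n ℝ)), h * Y * h⁻¹ =
      (((ContinuousLinearMap.mul ℝ (Matrix n n ℝ) h).comp
        ((ContinuousLinearMap.mul ℝ (Matrix n n ℝ)).flip h⁻¹)) : Matrix n n ℝ →L[ℝ] Matrix n n ℝ) Y := by
    intro Y
    simp [mul_assoc]
    rfl
  calc
    h * (∫ s in (0:ℝ)..1, mexp (-(s • ζ)) * X * mexp (s • ζ)) * h⁻¹
        = ∫ s in (0:ℝ)..1, h * (mexp (-(s • ζ)) * X * mexp (s • ζ)) * h⁻¹ := by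
          rw [hΦ]
          refine ((((ContinuousLinearMap.mul ℝ (Matrix n n ℝ)) h).comp
            ((ContinuousLinearMap.mul ℝ (Matrix n n ℝ)).flip
              h⁻¹)).intervalIntegral_comp_comm hint).symm.trans ?_
          refine intervalIntegral.integral_congr fun s _ => ?_
          simp [mul_assoc]
    _ = ∫ s in (0:ℝ)..1,
          g * mexp ((1 - s) • ζ) * X * mexp (-((1 - s) • ζ)) * g⁻¹ := by
          refine intervalIntegral.integral_congr fun s _ => ?_
          have hrev : h⁻¹ = mexp (-ζ) * g⁻¹ := by
            rw [hh, Matrix.mul_inv_rev]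
            congr 1
            exact (Matrix.exp_neg ζ).symm
          have e1 : mexp ζ * mexp (-(s • ζ)) = mexp ((1 - s) • ζ) := by
            rw [show (1 - s) • ζ = ζ + -(s • ζ) by rw [sub_smul, one_smul]; abel]
            exact (Matrix.exp_add_of_commute _ _
              (((Commute.refl ζ).smul_right s).neg_right)).symm
          have e2 : mexp (s • ζ) * mexp (-ζ) = mexp (-((1 - s) • ζ)) := by
            rw [show -((1 - s) • ζ) = s • ζ + -ζ by rw [sub_smul, one_smul]; abel]
            exact (Matrix.exp_add_of_commute _ _
              (((Commute.refl ζ).smul_left s).neg_right)).symm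
          show h * (mexp (-(s • ζ)) * X * mexp (s • ζ)) * h⁻¹ = _
          rw [hh, hrev]
          simp only [mul_assoc]
          rw [← mul_assoc (mexp ζ) (mexp (-(s • ζ))), e1,
            ← mul_assoc (mexp (s • ζ)) (mexp (-ζ)), e2]
    _ = ∫ s in (0:ℝ)..1,
          g * mexp (s • ζ) * X * mexp (-(s • ζ)) * g⁻¹ := by
          have := intervalIntegral.integral_comp_sub_left
            (fun s : ℝ => g * mexp (s • ζ) * X * mexp (-(s • ζ)) * g⁻¹) 1 (a := 0) (b := 1)
          simpa using this
    _ = ∫ s in (0:ℝ)..1,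
          mexp (s • (g * ζ * g⁻¹)) * (g * X * g⁻¹) * mexp (-(s • (g * ζ * g⁻¹))) := by
          refine intervalIntegral.integral_congr fun s _ => ?_
          have h1 : s • (g * ζ * g⁻¹) = g * (s • ζ) * g⁻¹ := by
            rw [Matrix.mul_smul, Matrix.smul_mul]
          have h2 : -(s • (g * ζ * g⁻¹)) = g * (-(s • ζ)) * g⁻¹ := by
            rw [h1, Matrix.mul_neg, Matrix.neg_mul]
          have hg' : g⁻¹ * g = 1 := Matrix.nonsing_inv_mul g
            ((Matrix.isUnit_iff_isUnit_det g).mp hg)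
          have c1 : mexp (s • (g * ζ * g⁻¹)) = g * mexp (s • ζ) * g⁻¹ := by
            rw [h1]; exact Matrix.exp_conj g _ hg
          have c2 : mexp (-(s • (g * ζ * g⁻¹))) = g * mexp (-(s • ζ)) * g⁻¹ := by
            rw [h2]; exact Matrix.exp_conj g _ hg
          rw [c1, c2]
          simp only [mul_assoc]
          simp only [← mul_assoc g⁻¹ g, hg', one_mul]
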